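/- Let p be a prime, n ≥ 1, and x = (x_0,…,x_{n−1}) ∈ 𝔽_p^n. Then, as an identity of values in 𝔽_p, max(x) = Σ_{t=1}^{p−1} ( 1 − Π_{i=0}^{n−1} L_t(x_i) ), where L_t(z) = Σ_{k=0}^{t−1} ( 1 − (z − k)^{p−1} ) is the polynomial expression of the low-pass function χ(z < t). -/

import Mathlib

/-- The maximum of the components of `x`, where elements of `ZMod p` are
compared via their canonical natural-number representatives. -/
def fmax {p n : ℕ} (x : Fin n → ZMod p) : ZMod p :=
  ((Finset.univ.sup fun i => (x i).val : ℕ) : ZMod p)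

/-- The least index `i` with `x i = fmax x`, as a natural number. -/
noncomputable def argmaxN {p n : ℕ} (x : Fin n → ZMod p) : ℕ :=
  sInf {i : ℕ | ∃ h : i < n, x ⟨i, h⟩ = fmax x}

/-- The `r`-th digit of the base-`p` expansion of `k`, as an element of `ZMod p`. -/
def digitP (p k r : ℕ) : ZMod p := (((k / p ^ r) % p : ℕ) : ZMod p)

/-- Polynomial expression of the low-pass function `χ(z < t)`. -/
def Lp (p t : ℕ) (z : ZMod p) : ZMod p :=
  ∑ k ∈ Finset.range t, (1 - (z - (k : ZMod p)) ^ (p - 1))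

/-- Polynomial expression of the Kronecker delta `χ(z = t)`. -/
def deltaP (p t : ℕ) (z : ZMod p) : ZMod p := 1 - (z - (t : ZMod p)) ^ (p - 1)

theorem max_lowpass_formula (p : ℕ) (hp : p.Prime) (n : ℕ) (hn : 1 ≤ n)
    (x : Fin n → ZMod p) :
    fmax x = ∑ t ∈ Finset.Icc 1 (p - 1), (1 - ∏ i, Lp p t (x i)) := by
  haveI : Fact p.Prime := ⟨hp⟩
  have hp2 := hp.two_le
  have hdelta : ∀ (z : ZMod p) (k : ℕ),
      (1 - (z - (k : ZMod p)) ^ (p - 1)) = if z = (k : ZMod p) then 1 else 0 := by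
    intro z k
    by_cases h : z = (k : ZMod p)
    · have : p - 1 ≠ 0 := by omega
      simp [h, zero_pow this]
    · rw [ZMod.pow_card_sub_one_eq_one (sub_ne_zero.mpr h)]
      simp [h]
  have hLp : ∀ (t : ℕ), t ≤ p → ∀ z : ZMod p,
      Lp p t z = if z.val < t then 1 else 0 := by
    intro t ht z
    unfold Lp
    rw [Finset.sum_congr rfl (fun k _ => hdelta z k)]
    have key : ∀ k ∈ Finset.range t,
        (if z = (k : ZMod p) then (1 : ZMod p) else 0) = if k = z.val then 1 else 0 := by
      intro k hk
      congr 1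
      simp only [eq_iff_iff]
      constructor
      · intro h
        rw [h, ZMod.val_cast_of_lt (lt_of_lt_of_le (Finset.mem_range.mp hk) ht)]
      · intro h
        rw [h, ZMod.natCast_val, ZMod.cast_id]
    rw [Finset.sum_congr rfl key, Finset.sum_ite_eq' (Finset.range t) z.val (fun _ => (1 : ZMod p))]
    simp [Finset.mem_range]
  set M : ℕ := Finset.univ.sup (fun i => (x i).val) with hM
  have hMlt : M < p := by
    apply Finset.sup_lt_iff (show (⊥ : ℕ) < p by simpa using hp.pos) |>.mpr
    intro i _
    exact ZMod.val_lt (x i)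
  have hprod : ∀ t ∈ Finset.Icc 1 (p - 1),
      (∏ i, Lp p t (x i)) = if M < t then 1 else 0 := by
    intro t ht
    obtain ⟨ht1, ht2⟩ := Finset.mem_Icc.mp ht
    have htp : t ≤ p := by omega
    have hcong : ∀ i : Fin n, Lp p t (x i) = if (x i).val < t then 1 else 0 :=
      fun i => hLp t htp (x i)
    rw [Finset.prod_congr rfl (fun i _ => hcong i)]
    by_cases h : M < t
    · have : ∀ i : Fin n, (x i).val < t := by
        intro i
        exact lt_of_le_of_lt (Finset.le_sup (f := fun i => (x i).val) (Finset.mem_univ i)) h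
      rw [Finset.prod_eq_one (fun i _ => by simp [this i])]
      simp [h]
    · have : ∃ i : Fin n, ¬ (x i).val < t := by
        by_contra hc
        push_neg at hc
        exact h (Finset.sup_lt_iff (show (⊥ : ℕ) < t by simp; omega) |>.mpr (fun i _ => hc i))
      obtain ⟨i, hi⟩ := this
      rw [Finset.prod_eq_zero (Finset.mem_univ i) (by simp [hi])]
      simp [h]
  rw [Finset.sum_congr rfl (fun t ht => by rw [hprod t ht])]
  have step : ∀ t ∈ Finset.Icc 1 (p - 1),
      (1 - if M < t then (1 : ZMod p) else 0) = if t ≤ M then 1 else 0 := by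
    intro t _
    by_cases h : M < t
    · simp [h, Nat.not_le.mpr h]
    · simp [h, Nat.le_of_not_lt h]
  rw [Finset.sum_congr rfl step, Finset.sum_boole]
  have hfilter : (Finset.Icc 1 (p - 1)).filter (fun t => t ≤ M) = Finset.Icc 1 M := by
    ext t
    simp only [Finset.mem_filter, Finset.mem_Icc]
    omega
  rw [hfilter]
  have : fmax x = ((M : ℕ) : ZMod p) := rfl
  rw [this]
  simp [Nat.card_Icc]
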